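/- In the girth-4 setting: every vertex of T has at most two neighbors among {x₁,x₂,x₃,x₄}, and if it has exactly two then they form an opposite pair {x_i, x_{i+2}} (so T = T₀ ∪ T₁ ∪ T₂ and T₂ = T_{{x₁,x₃}} ∪ T_{{x₂,x₄}}); for each i there are no edges between T_{{x_i,x_{i+2}}} and T_{x_i}; each set T_{x_i} and each set T_{{x_i,x_{i+2}}} is an independent set of G; and |T_{x_i}| ≤ 3 for each i ∈ {1,2,3,4}. -/

import Mathlib

/-- The adjacency matrix of a simple graph over `ℝ` is Hermitian. -/
lemma adjMatrix_isHermitian {V : Type*} [Fintype V] (G : SimpleGraph V)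
    [DecidableRel G.Adj] : ((G.adjMatrix ℝ)).IsHermitian := by
  rw [Matrix.IsHermitian, Matrix.conjTranspose_eq_transpose_of_trivial]
  exact G.isSymm_adjMatrix

/-- The number of eigenvalues (counted with multiplicity) of the real adjacency matrix of `G`
satisfying the predicate `p`. -/
noncomputable def eigCount {V : Type*} [Fintype V] [DecidableEq V]
    (G : SimpleGraph V) (p : ℝ → Prop) : ℕ := by
  classical
  exact (Finset.univ.filter fun i =>
    p ((adjMatrix_isHermitian G).eigenvalues i)).card
/-- `HasMinor G H` : `H` is a minor of `G`, witnessed by a family of pairwise disjoint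
nonempty branch sets, each inducing a connected subgraph of `G`, such that every edge of `H`
is realized by an edge of `G` between the corresponding branch sets. -/
def HasMinor {V : Type*} {W : Type*} (G : SimpleGraph V) (H : SimpleGraph W) : Prop :=
  ∃ B : W → Set V,
    (∀ w, (B w).Nonempty) ∧
    (Pairwise fun w₁ w₂ => Disjoint (B w₁) (B w₂)) ∧
    (∀ w, (G.induce (B w)).Connected) ∧
    (∀ ⦃w₁ w₂⦄, H.Adj w₁ w₂ → ∃ a ∈ B w₁, ∃ b ∈ B w₂, G.Adj a b)

/-- `G` is planar in the sense of Wagner: it has neither `K₅` nor `K_{3,3}` as a minor. -/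
def WagnerPlanar {V : Type*} (G : SimpleGraph V) : Prop :=
  ¬ HasMinor G (⊤ : SimpleGraph (Fin 5)) ∧
    ¬ HasMinor G (completeBipartiteGraph (Fin 3) (Fin 3))
/-- For a 4-cycle `x₀x₁x₂x₃x₀` in `G` and `S ⊆ Fin 4`, the set
`T_S = {v ∉ {x₀,x₁,x₂,x₃} : N(v) ∩ {x₀,x₁,x₂,x₃} = {x i : i ∈ S}}`. -/
def TS {V : Type*} (G : SimpleGraph V) (x : Fin 4 → V) (S : Set (Fin 4)) : Set V :=
  {v | v ∉ Set.range x ∧ ∀ i, G.Adj v (x i) ↔ i ∈ S}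

/-- The set `T_j` of vertices outside the 4-cycle having exactly `j` neighbors among
`{x₀,x₁,x₂,x₃}`. -/
def Tdeg {V : Type*} (G : SimpleGraph V) (x : Fin 4 → V) (j : ℕ) : Set V :=
  {v | v ∉ Set.range x ∧ {i : Fin 4 | G.Adj v (x i)}.ncard = j}

section Aux

lemma fin4_consec : ∀ F : Finset (Fin 4), (∀ i : Fin 4, ¬(i ∈ F ∧ i + 1 ∈ F)) →
    F.card ≤ 2 ∧ (F.card = 2 → F = {0, 2} ∨ F = {1, 3}) := by decide

lemma no_triangle {V : Type*} [DecidableEq V] {G : SimpleGraph V} (htf : G.CliqueFree 3)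
    {u w z : V} (h1 : G.Adj u z) (h2 : G.Adj w z) : ¬ G.Adj u w :=
  fun h => htf {u, w, z} (SimpleGraph.is3Clique_triple_iff.2 ⟨h, h1, h2⟩)

open Matrix in
lemma two_eig_of_quadform {V : Type*} [Fintype V] [DecidableEq V]
    (A : Matrix V V ℝ) (hA : A.IsHermitian) (y₁ y₂ : V → ℝ)
    (h : ∀ a b : ℝ, ¬(a = 0 ∧ b = 0) →
      (∑ v, (a * y₁ v + b * y₂ v)^2) <
        ∑ v, ∑ w, (a * y₁ v + b * y₂ v) * A v w * (a * y₁ w + b * y₂ w))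
    (hc : (Finset.univ.filter fun i => 1 < hA.eigenvalues i).card ≤ 1) : False := by
  set U : Matrix V V ℝ := (hA.eigenvectorUnitary : Matrix V V ℝ) with hUdef
  have hUU : U * star U = 1 := (Matrix.mem_unitaryGroup_iff).mp hA.eigenvectorUnitary.2
  have hspec : A = U * Matrix.diagonal hA.eigenvalues * star U := by
    have := hA.spectral_theorem
    rwa [RCLike.ofReal_real_eq_id, Function.id_comp] at this
  have hstar : star U = Uᵀ := by
    rw [Matrix.star_eq_conjTranspose, Matrix.conjTranspose_eq_transpose_of_trivial]
  set z₁ : V → ℝ := star U *ᵥ y₁ with hz₁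
  set z₂ : V → ℝ := star U *ᵥ y₂ with hz₂
  obtain ⟨a, b, hab, hzero⟩ : ∃ a b : ℝ, ¬(a = 0 ∧ b = 0) ∧
      ∀ i, 1 < hA.eigenvalues i → a * z₁ i + b * z₂ i = 0 := by
    rcases (Finset.univ.filter fun i => 1 < hA.eigenvalues i).eq_empty_or_nonempty with he | ⟨i₀, hi₀⟩
    · refine ⟨1, 0, by norm_num, fun i hi => absurd (show i ∈ Finset.univ.filter (fun j => 1 < hA.eigenvalues j) from Finset.mem_filter.2 ⟨Finset.mem_univ _, hi⟩) ?_⟩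
      rw [he]; exact Finset.notMem_empty i
    · have huniq : ∀ i, 1 < hA.eigenvalues i → i = i₀ := fun i hi =>
        Finset.card_le_one.mp hc i (Finset.mem_filter.2 ⟨Finset.mem_univ _, hi⟩) i₀ hi₀
      by_cases h0 : z₁ i₀ = 0 ∧ z₂ i₀ = 0
      · exact ⟨1, 0, by norm_num, fun i hi => by rw [huniq i hi]; simp [h0.1, h0.2]⟩
      · refine ⟨z₂ i₀, -z₁ i₀, ?_, fun i hi => by rw [huniq i hi]; ring⟩
        rintro ⟨h1, h2⟩
        exact h0 ⟨by linarith, h1⟩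
  set x : V → ℝ := fun v => a * y₁ v + b * y₂ v with hxdef
  have hxs : x = a • y₁ + b • y₂ := by funext v; simp [hxdef]
  set z : V → ℝ := star U *ᵥ x with hzdef
  have hzz : ∀ i, z i = a * z₁ i + b * z₂ i := by
    intro i
    rw [hzdef, hxs, Matrix.mulVec_add, Matrix.mulVec_smul, Matrix.mulVec_smul]
    simp [hz₁, hz₂]
  have hdot : ∀ t : V → ℝ, x ⬝ᵥ (U *ᵥ t) = z ⬝ᵥ t := by
    intro t
    rw [Matrix.dotProduct_mulVec, hzdef, hstar, Matrix.mulVec_transpose]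
  have hQ : (∑ v, ∑ w, x v * A v w * x w) = ∑ i, hA.eigenvalues i * (z i)^2 := by
    have h1 : x ⬝ᵥ (A *ᵥ x) = ∑ v, ∑ w, x v * A v w * x w := by
      simp [dotProduct, Matrix.mulVec, Finset.mul_sum, mul_assoc]
    rw [← h1]
    conv_lhs => rw [hspec, ← Matrix.mulVec_mulVec, ← Matrix.mulVec_mulVec]
    rw [hdot, ← hzdef]
    simp [dotProduct, Matrix.mulVec_diagonal]
    exact Finset.sum_congr rfl fun i _ => by ring
  have hN : (∑ v, (x v)^2) = ∑ i, (z i)^2 := by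
    have h1 : x ⬝ᵥ x = ∑ v, (x v)^2 := by simp [dotProduct, sq]
    have h2 : z ⬝ᵥ z = ∑ i, (z i)^2 := by simp [dotProduct, sq]
    rw [← h1, ← h2]
    conv_lhs => rw [show x ⬝ᵥ x = x ⬝ᵥ ((U * star U) *ᵥ x) by rw [hUU, Matrix.one_mulVec]]
    rw [← Matrix.mulVec_mulVec, hdot, ← hzdef]
  have hle : (∑ i, hA.eigenvalues i * (z i)^2) ≤ ∑ i, (z i)^2 := by
    refine Finset.sum_le_sum fun i _ => ?_
    by_cases hi : 1 < hA.eigenvalues i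
    · have : z i = 0 := by rw [hzz]; exact hzero i hi
      simp [this]
    · push_neg at hi
      nlinarith [sq_nonneg (z i)]
  have := h a b hab
  rw [hQ, hN] at this
  linarith

lemma TS_zero_card {V : Type*} [Fintype V] [DecidableEq V] (G : SimpleGraph V)
    [inst : DecidableRel G.Adj] (htf : G.CliqueFree 3)
    (hl : (Finset.univ.filter fun i =>
        1 < (adjMatrix_isHermitian G).eigenvalues i).card ≤ 1)
    (x : Fin 4 → V) (hinj : Function.Injective x)
    (hcyc : ∀ i, G.Adj (x i) (x (i + 1))) :
    (TS G x {0}).ncard ≤ 3 := by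
  by_contra hn
  push_neg at hn
  have hfin : (TS G x {0}).Finite := Set.toFinite _
  rw [Set.ncard_eq_toFinset_card _ hfin] at hn
  obtain ⟨t, hts, htc⟩ := Finset.exists_subset_card_eq (show 4 ≤ hfin.toFinset.card from hn)
  obtain ⟨a0, ha0⟩ := Finset.card_pos.mp (by omega : 0 < t.card)
  have h3 : (t.erase a0).card = 3 := by rw [Finset.card_erase_of_mem ha0, htc]
  obtain ⟨b0, c0, d0, hbc, hbd, hcd, he⟩ := Finset.card_eq_three.mp h3
  have hmem : ∀ y ∈ t, y ∈ TS G x {0} := fun y hy => (hfin.mem_toFinset).mp (hts hy)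
  have hb0 : b0 ∈ t.erase a0 := by rw [he]; simp
  have hc0 : c0 ∈ t.erase a0 := by rw [he]; simp
  have hd0 : d0 ∈ t.erase a0 := by rw [he]; simp
  have hab : a0 ≠ b0 := fun h => (Finset.mem_erase.mp hb0).1 h.symm
  have hac : a0 ≠ c0 := fun h => (Finset.mem_erase.mp hc0).1 h.symm
  have had : a0 ≠ d0 := fun h => (Finset.mem_erase.mp hd0).1 h.symm
  set u : Fin 4 → V := ![a0, b0, c0, d0] with hu
  have humem : ∀ k, u k ∈ TS G x {0} := by
    intro k
    fin_cases k <;> simp only [hu, Matrix.cons_val_zero, Matrix.cons_val_one, Matrix.head_cons,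
      Matrix.cons_val_two, Matrix.tail_cons, Matrix.cons_val_three]
    · exact hmem _ ha0
    · exact hmem _ (Finset.mem_of_mem_erase hb0)
    · exact hmem _ (Finset.mem_of_mem_erase hc0)
    · exact hmem _ (Finset.mem_of_mem_erase hd0)
  have huinj : Function.Injective u := by
    intro k l h
    fin_cases k <;> fin_cases l <;>
      simp only [hu, Matrix.cons_val_zero, Matrix.cons_val_one, Matrix.head_cons,
        Matrix.cons_val_two, Matrix.tail_cons, Matrix.cons_val_three] at h ⊢ <;>
      first
        | rfl
        | exact absurd h (by assumption)
        | exact absurd h.symm (by assumption)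
  have huadj : ∀ k, G.Adj (u k) (x 0) := fun k => ((humem k).2 0).mpr rfl
  have hux : ∀ k j, u k ≠ x j := fun k j h => (humem k).1 ⟨j, h.symm⟩
  have huindep : ∀ k l, ¬ G.Adj (u k) (u l) := fun k l => no_triangle htf (huadj k) (huadj l)
  have e01 : G.Adj (x 0) (x 1) := hcyc 0
  have e12 : G.Adj (x 1) (x 2) := hcyc 1
  have e23 : G.Adj (x 2) (x 3) := hcyc 2
  have e30 : G.Adj (x 3) (x 0) := by simpa using hcyc 3
  have n02 : ¬ G.Adj (x 0) (x 2) := no_triangle htf e01 e12.symm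
  have n13 : ¬ G.Adj (x 1) (x 3) := no_triangle htf e12 e23.symm
  -- adjacency matrix entry lemmas
  have A00 : (G.adjMatrix ℝ) (x 0) (x 0) = 0 := by simp
  have A11 : (G.adjMatrix ℝ) (x 1) (x 1) = 0 := by simp
  have A22 : (G.adjMatrix ℝ) (x 2) (x 2) = 0 := by simp
  have A33 : (G.adjMatrix ℝ) (x 3) (x 3) = 0 := by simp
  have A01 : (G.adjMatrix ℝ) (x 0) (x 1) = 1 := by simp [e01]
  have A10 : (G.adjMatrix ℝ) (x 1) (x 0) = 1 := by simp [e01.symm]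
  have A12 : (G.adjMatrix ℝ) (x 1) (x 2) = 1 := by simp [e12]
  have A21 : (G.adjMatrix ℝ) (x 2) (x 1) = 1 := by simp [e12.symm]
  have A23 : (G.adjMatrix ℝ) (x 2) (x 3) = 1 := by simp [e23]
  have A32 : (G.adjMatrix ℝ) (x 3) (x 2) = 1 := by simp [e23.symm]
  have A30 : (G.adjMatrix ℝ) (x 3) (x 0) = 1 := by simp [e30]
  have A03 : (G.adjMatrix ℝ) (x 0) (x 3) = 1 := by simp [e30.symm]
  have A02 : (G.adjMatrix ℝ) (x 0) (x 2) = 0 := by simp [n02]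
  have n20 : ¬ G.Adj (x 2) (x 0) := fun h => n02 h.symm
  have A20 : (G.adjMatrix ℝ) (x 2) (x 0) = 0 := by simp [n20]
  have A13 : (G.adjMatrix ℝ) (x 1) (x 3) = 0 := by simp [n13]
  have n31 : ¬ G.Adj (x 3) (x 1) := fun h => n13 h.symm
  have A31 : (G.adjMatrix ℝ) (x 3) (x 1) = 0 := by simp [n31]
  have Aux0 : ∀ k, (G.adjMatrix ℝ) (u k) (x 0) = 1 := fun k => by simp [huadj k]
  have Axu0 : ∀ k, (G.adjMatrix ℝ) (x 0) (u k) = 1 := fun k => by simp [(huadj k).symm]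
  have Aux1 : ∀ k, (G.adjMatrix ℝ) (u k) (x 1) = 0 := fun k => by
    simp only [SimpleGraph.adjMatrix_apply, ite_eq_right_iff]
    intro h; exact absurd (((humem k).2 1).mp h) (by decide)
  have Aux2 : ∀ k, (G.adjMatrix ℝ) (u k) (x 2) = 0 := fun k => by
    simp only [SimpleGraph.adjMatrix_apply, ite_eq_right_iff]
    intro h; exact absurd (((humem k).2 2).mp h) (by decide)
  have Aux3 : ∀ k, (G.adjMatrix ℝ) (u k) (x 3) = 0 := fun k => by
    simp only [SimpleGraph.adjMatrix_apply, ite_eq_right_iff]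
    intro h; exact absurd (((humem k).2 3).mp h) (by decide)
  have Axu1 : ∀ k, (G.adjMatrix ℝ) (x 1) (u k) = 0 := fun k => by
    simp only [SimpleGraph.adjMatrix_apply, ite_eq_right_iff]
    intro h; exact absurd (((humem k).2 1).mp h.symm) (by decide)
  have Axu2 : ∀ k, (G.adjMatrix ℝ) (x 2) (u k) = 0 := fun k => by
    simp only [SimpleGraph.adjMatrix_apply, ite_eq_right_iff]
    intro h; exact absurd (((humem k).2 2).mp h.symm) (by decide)
  have Axu3 : ∀ k, (G.adjMatrix ℝ) (x 3) (u k) = 0 := fun k => by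
    simp only [SimpleGraph.adjMatrix_apply, ite_eq_right_iff]
    intro h; exact absurd (((humem k).2 3).mp h.symm) (by decide)
  have Auu : ∀ k l, (G.adjMatrix ℝ) (u k) (u l) = 0 := fun k l => by simp [huindep k l]
  -- the support function
  set wfun : Fin 4 ⊕ Fin 4 → V := Sum.elim x u with hwfun
  have hwinj : Function.Injective wfun := by
    rintro (p | p) (q | q) h <;>
      simp only [hwfun, Sum.elim_inl, Sum.elim_inr] at h
    · exact congrArg Sum.inl (hinj h)
    · exact absurd h.symm (hux q p)
    · exact absurd h (hux p q)
    · exact congrArg Sum.inr (huinj h)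
  set c1 : Fin 4 ⊕ Fin 4 → ℝ := Sum.elim ![100, 54, 41, 54] (fun _ => 38) with hc1
  set c2 : Fin 4 ⊕ Fin 4 → ℝ := Sum.elim ![100, -131, -241, -131] (fun _ => 92) with hc2
  set y1 : V → ℝ := fun v => ∑ i, if v = wfun i then c1 i else 0 with hy1
  set y2 : V → ℝ := fun v => ∑ i, if v = wfun i then c2 i else 0 with hy2
  have hyval : ∀ (c : Fin 4 ⊕ Fin 4 → ℝ) (j : Fin 4 ⊕ Fin 4),
      (∑ i, if wfun j = wfun i then c i else 0) = c j := by
    intro c j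
    rw [Finset.sum_eq_single j]
    · simp
    · intro i _ hij
      exact if_neg fun h => hij (hwinj h).symm
    · intro hj; exact absurd (Finset.mem_univ j) hj
  have hrestrict : ∀ g : V → ℝ, (∀ v, v ∉ Set.range wfun → g v = 0) →
      ∑ v, g v = ∑ i, g (wfun i) := by
    intro g hg
    rw [show (∑ i, g (wfun i)) = ∑ v ∈ Finset.univ.image wfun, g v from
      (Finset.sum_image fun i _ j _ h => hwinj h).symm]
    refine (Finset.sum_subset (Finset.subset_univ _) fun v _ hv => hg v fun ⟨i, hi⟩ =>
      hv (Finset.mem_image.2 ⟨i, Finset.mem_univ i, hi⟩)).symm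
  refine two_eig_of_quadform (G.adjMatrix ℝ) (adjMatrix_isHermitian G) y1 y2 ?_ hl
  intro a b hab2
  set X : V → ℝ := fun v => a * y1 v + b * y2 v with hX
  have hXz : ∀ v, v ∉ Set.range wfun → X v = 0 := by
    intro v hv
    simp only [hX, hy1, hy2]
    rw [Finset.sum_eq_zero fun i _ => if_neg fun h => hv ⟨i, h.symm⟩,
      Finset.sum_eq_zero fun i _ => if_neg fun h => hv ⟨i, h.symm⟩]
    ring
  have hXv : ∀ j, X (wfun j) = a * c1 j + b * c2 j := by
    intro j; simp only [hX, hy1, hy2, hyval]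
  have hQr : (∑ v, ∑ w, X v * (G.adjMatrix ℝ) v w * X w)
      = ∑ i, ∑ j, (a * c1 i + b * c2 i) * (G.adjMatrix ℝ) (wfun i) (wfun j)
          * (a * c1 j + b * c2 j) := by
    rw [hrestrict _ (fun v hv => Finset.sum_eq_zero fun w _ => by rw [hXz v hv]; ring)]
    refine Finset.sum_congr rfl fun i _ => ?_
    rw [hrestrict _ (fun w hw => by rw [hXz w hw]; ring)]
    exact Finset.sum_congr rfl fun j _ => by rw [hXv, hXv]
  have hNr : (∑ v, (X v)^2) = ∑ i, (a * c1 i + b * c2 i)^2 := by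
    rw [hrestrict _ (fun v hv => by rw [hXz v hv]; ring)]
    exact Finset.sum_congr rfl fun i _ => by rw [hXv]
  show (∑ v, (X v)^2) < ∑ v, ∑ w, X v * (G.adjMatrix ℝ) v w * X w
  rw [hQr, hNr]
  simp only [Fintype.sum_sum_type, Fin.sum_univ_four, hwfun, Sum.elim_inl, Sum.elim_inr,
    A00, A01, A02, A03, A10, A11, A12, A13, A20, A21, A22, A23, A30, A31, A32, A33,
    Aux0, Aux1, Aux2, Aux3, Axu0, Axu1, Axu2, Axu3, Auu,
    hc1, hc2, Matrix.cons_val_zero, Matrix.cons_val_one, Matrix.head_cons,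
    Matrix.cons_val_two, Matrix.tail_cons, Matrix.cons_val_three]
  ring_nf
  rcases eq_or_ne b 0 with hb | hb
  · subst hb
    have ha : a ≠ 0 := fun h => hab2 ⟨h, rfl⟩
    nlinarith [mul_self_pos.mpr ha]
  · nlinarith [sq_nonneg (37567*a - 125*b), mul_self_pos.mpr hb, sq_nonneg a, sq_nonneg b]

end Aux

/-- in the girth-4 setting, every vertex outside the 4-cycle has at most two
neighbors on it; `T = T₀ ∪ T₁ ∪ T₂` with `T₂ = T_{{x₀,x₂}} ∪ T_{{x₁,x₃}}`; there are no
edges between `T_{{x_i,x_{i+2}}}` and `T_{x_i}`; each `T_{x_i}` and each `T_{{x_i,x_{i+2}}}`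
is independent; and `|T_{x_i}| ≤ 3` for every `i`. -/
theorem girth_four_structure {V : Type*} [Fintype V] [DecidableEq V] (G : SimpleGraph V)
    (hconn : G.Connected) (htf : G.CliqueFree 3)
    (hl : eigCount G (fun t => 1 < t) ≤ 1) (hplanar : WagnerPlanar G)
    (hgirth : G.egirth = 4) (x : Fin 4 → V) (hinj : Function.Injective x)
    (hcyc : ∀ i, G.Adj (x i) (x (i + 1))) :
    (∀ v : V, v ∉ Set.range x → {i : Fin 4 | G.Adj v (x i)}.ncard ≤ 2) ∧
    {v : V | v ∉ Set.range x} = Tdeg G x 0 ∪ Tdeg G x 1 ∪ Tdeg G x 2 ∧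
    Tdeg G x 2 = TS G x {0, 2} ∪ TS G x {1, 3} ∧
    (∀ i : Fin 4, ∀ u ∈ TS G x {i, i + 2}, ∀ w ∈ TS G x {i}, ¬ G.Adj u w) ∧
    (∀ i : Fin 4, ∀ u ∈ TS G x {i}, ∀ w ∈ TS G x {i}, ¬ G.Adj u w) ∧
    (∀ i : Fin 4, ∀ u ∈ TS G x {i, i + 2}, ∀ w ∈ TS G x {i, i + 2}, ¬ G.Adj u w) ∧
    (∀ i : Fin 4, (TS G x {i}).ncard ≤ 3) := by
  classical
  have hncard : ∀ v : V, {i : Fin 4 | G.Adj v (x i)}.ncard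
      = (Finset.univ.filter fun i => G.Adj v (x i)).card := by
    intro v
    rw [show {i : Fin 4 | G.Adj v (x i)} = ↑(Finset.univ.filter fun i => G.Adj v (x i)) by
      ext i; simp, Set.ncard_coe_finset]
  have hnocons : ∀ v : V, v ∉ Set.range x → ∀ i : Fin 4,
      ¬(i ∈ Finset.univ.filter (fun i => G.Adj v (x i)) ∧
        (i + 1) ∈ Finset.univ.filter (fun i => G.Adj v (x i))) := by
    rintro v hv i ⟨h1, h2⟩
    simp only [Finset.mem_filter] at h1 h2
    exact no_triangle htf h1.2.symm h2.2.symm (hcyc i)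
  have part1 : ∀ v : V, v ∉ Set.range x → {i : Fin 4 | G.Adj v (x i)}.ncard ≤ 2 := by
    intro v hv; rw [hncard]; exact (fin4_consec _ (hnocons v hv)).1
  refine ⟨part1, ?_, ?_, ?_, ?_, ?_, ?_⟩
  · ext v
    simp only [Set.mem_setOf_eq, Set.mem_union, Tdeg]
    constructor
    · intro hv
      have h2 := part1 v hv
      have : {i : Fin 4 | G.Adj v (x i)}.ncard = 0 ∨ {i : Fin 4 | G.Adj v (x i)}.ncard = 1 ∨
          {i : Fin 4 | G.Adj v (x i)}.ncard = 2 := by omega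
      rcases this with h | h | h
      exacts [Or.inl (Or.inl ⟨hv, h⟩), Or.inl (Or.inr ⟨hv, h⟩), Or.inr ⟨hv, h⟩]
    · rintro ((⟨h, -⟩ | ⟨h, -⟩) | ⟨h, -⟩) <;> exact h
  · ext v
    simp only [Tdeg, Set.mem_setOf_eq, Set.mem_union, TS]
    constructor
    · rintro ⟨hv, hc2⟩
      rw [hncard] at hc2
      rcases (fin4_consec _ (hnocons v hv)).2 hc2 with h | h
      · left
        refine ⟨hv, fun i => ?_⟩
        have hmem : i ∈ Finset.univ.filter (fun i => G.Adj v (x i)) ↔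
            i ∈ ({0, 2} : Finset (Fin 4)) := by rw [h]
        simp only [Finset.mem_filter, Finset.mem_univ, true_and, Finset.mem_insert,
          Finset.mem_singleton] at hmem
        simpa [Set.mem_insert_iff, Set.mem_singleton_iff] using hmem
      · right
        refine ⟨hv, fun i => ?_⟩
        have hmem : i ∈ Finset.univ.filter (fun i => G.Adj v (x i)) ↔
            i ∈ ({1, 3} : Finset (Fin 4)) := by rw [h]
        simp only [Finset.mem_filter, Finset.mem_univ, true_and, Finset.mem_insert,
          Finset.mem_singleton] at hmem
        simpa [Set.mem_insert_iff, Set.mem_singleton_iff] using hmem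
    · rintro (⟨hv, ha⟩ | ⟨hv, ha⟩) <;> refine ⟨hv, ?_⟩
      · have hset : {i : Fin 4 | G.Adj v (x i)} = {0, 2} := by
          ext i; simpa using ha i
        rw [hset, Set.ncard_pair (by decide : (0 : Fin 4) ≠ 2)]
      · have hset : {i : Fin 4 | G.Adj v (x i)} = {1, 3} := by
          ext i; simpa using ha i
        rw [hset, Set.ncard_pair (by decide : (1 : Fin 4) ≠ 3)]
  · rintro i u ⟨hur, hua⟩ w ⟨hwr, hwa⟩
    exact no_triangle htf ((hua i).mpr (Set.mem_insert _ _)) ((hwa i).mpr rfl)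
  · rintro i u ⟨hur, hua⟩ w ⟨hwr, hwa⟩
    exact no_triangle htf ((hua i).mpr rfl) ((hwa i).mpr rfl)
  · rintro i u ⟨hur, hua⟩ w ⟨hwr, hwa⟩
    exact no_triangle htf ((hua i).mpr (Set.mem_insert _ _)) ((hwa i).mpr (Set.mem_insert _ _))
  · intro i
    unfold eigCount at hl
    set x' : Fin 4 → V := fun j => x (i + j) with hx'
    have hinj' : Function.Injective x' := fun j k h => add_left_cancel (hinj h)
    have hcyc' : ∀ j, G.Adj (x' j) (x' (j + 1)) := by
      intro j; simpa [hx', add_assoc] using hcyc (i + j)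
    have hts : TS G x {i} = TS G x' {0} := by
      ext v
      simp only [TS, Set.mem_setOf_eq, Set.mem_singleton_iff]
      constructor
      · rintro ⟨hr, ha⟩
        refine ⟨fun ⟨j, hj⟩ => hr ⟨i + j, hj⟩, fun j => ?_⟩
        rw [show x' j = x (i + j) from rfl, ha (i + j)]
        constructor
        · exact fun h => add_eq_left.mp h
        · rintro rfl; simp
      · rintro ⟨hr, ha⟩
        refine ⟨fun ⟨j, hj⟩ => hr ⟨j - i, ?_⟩, fun j => ?_⟩
        · show x (i + (j - i)) = v
          rwa [show i + (j - i) = j from add_sub_cancel i j]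
        · have h2 := ha (j - i)
          rw [show x' (j - i) = x j from by
            show x (i + (j - i)) = x j
            rw [show i + (j - i) = j from add_sub_cancel i j]] at h2
          rw [h2, sub_eq_zero]
    rw [hts]
    exact TS_zero_card G htf hl x' hinj' hcyc'
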